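/- Let B be a K-acceptor for a timed language L. Then the state equivalence ≈^B coincides with ≈^{L,K} on all timed words if and only if for all half-integral words u, v ∈ (Σ_K)* which are small w.r.t. K: u ≈^B v if and only if u ≈^{L,K} v. -/

import Mathlib

open scoped NNReal Classical

namespace IRTA

/-- A timestamp is a finite sequence of non-negative reals. -/
abbrev Timestamp : Type := List ℝ≥0

/-- A timed word is a finite sequence of (delay, letter) pairs. -/
abbrev TimedWord (A : Type) : Type := List (ℝ≥0 × A)

/-- Fractional part of a non-negative real. -/
noncomputable def fracPart (x : ℝ≥0) : ℝ≥0 := x - (⌊x⌋₊ : ℝ≥0)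

/-- `x` is a natural-number value. -/
def IsNatVal (x : ℝ≥0) : Prop := ∃ m : ℕ, x = (m : ℝ≥0)

/-- Region equivalence `≡^K`. -/
def RegEq (K : ℕ) (x y : ℝ≥0) : Prop :=
  (⌊x⌋₊ = ⌊y⌋₊ ∧ (fracPart x = 0 ↔ fracPart y = 0)) ∨ ((K : ℝ≥0) < x ∧ (K : ℝ≥0) < y)

/-- One step of the (greedy) clock evolution: reset whenever the value is an
integer between `0` and `K`. -/
noncomputable def resetStep (K : ℕ) (v : ℝ≥0) : ℝ≥0 :=
  if ∃ m : ℕ, m ≤ K ∧ v = (m : ℝ≥0) then 0 else v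

/-- Auxiliary function computing `c^K` with accumulator `v`. -/
noncomputable def cKAux (K : ℕ) : ℝ≥0 → Timestamp → ℝ≥0
  | v, [] => v
  | v, t :: d => cKAux K (resetStep K (v + t)) d

/-- `c^K(d)`: the sum of the delays after the last integral position of `d`. -/
noncomputable def cK (K : ℕ) (d : Timestamp) : ℝ≥0 := cKAux K 0 d

/-- `c^K` of a timed word is `c^K` of its timestamp. -/
noncomputable def cKW {A : Type} (K : ℕ) (w : TimedWord A) : ℝ≥0 :=
  cK K (w.map Prod.fst)

/-- `c^K_⊤` : `c^K` truncated at `K`. -/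
noncomputable def cKTop {A : Type} (K : ℕ) (w : TimedWord A) : WithTop ℝ≥0 :=
  if cKW K w ≤ (K : ℝ≥0) then ((cKW K w : ℝ≥0) : WithTop ℝ≥0) else ⊤

/-! ### Clock constraints and one-clock timed automata -/

/-- Clock constraints `φ ::= x < m | m < x | x = m | φ ∧ φ`. -/
inductive CC : Type where
  | lt : ℕ → CC
  | gt : ℕ → CC
  | eq : ℕ → CC
  | and : CC → CC → CC

/-- Satisfaction of a clock constraint by a clock value. -/
def CC.sat : CC → ℝ≥0 → Prop
  | .lt m, x => x < (m : ℝ≥0)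
  | .gt m, x => (m : ℝ≥0) < x
  | .eq m, x => x = (m : ℝ≥0)
  | .and φ ψ, x => φ.sat x ∧ ψ.sat x

/-- The largest constant appearing in a clock constraint. -/
def CC.maxConst : CC → ℕ
  | .lt m => m
  | .gt m => m
  | .eq m => m
  | .and φ ψ => max φ.maxConst ψ.maxConst

/-- A transition of a one-clock timed automaton; `reset = true` means the
clock is reset (the `r = 0` case). -/
structure TTrans (Q A : Type) where
  src : Q
  dst : Q
  lab : A
  guard : CC
  reset : Bool

/-- A one-clock timed automaton. -/
structure TA (A : Type) where
  Q : Type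
  init : Q
  final : Set Q
  trans : Set (TTrans Q A)

/-- The automaton has finitely many states and transitions. -/
def TA.IsFinite {A : Type} (M : TA A) : Prop := Finite M.Q ∧ M.trans.Finite

/-- Runs of a one-clock timed automaton between configurations. -/
inductive Steps {A : Type} (M : TA A) : M.Q × ℝ≥0 → TimedWord A → M.Q × ℝ≥0 → Prop
  | nil (c : M.Q × ℝ≥0) : Steps M c [] c
  | cons {q : M.Q} {ν t : ℝ≥0} {a : A} {w : TimedWord A} {c : M.Q × ℝ≥0}
      (θ : TTrans M.Q A) (hθ : θ ∈ M.trans) (hsrc : θ.src = q) (hlab : θ.lab = a)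
      (hg : θ.guard.sat (ν + t))
      (hrest : Steps M (θ.dst, if θ.reset then 0 else ν + t) w c) :
      Steps M (q, ν) ((t, a) :: w) c

/-- The language of `M` from a given configuration. -/
def TA.LangFrom {A : Type} (M : TA A) (c : M.Q × ℝ≥0) : Set (TimedWord A) :=
  {w | ∃ q' : M.Q, ∃ ν' : ℝ≥0, Steps M c w (q', ν') ∧ q' ∈ M.final}

/-- The language of `M` (from the initial configuration). -/
def TA.Lang {A : Type} (M : TA A) : Set (TimedWord A) := M.LangFrom (M.init, 0)

/-- Determinism: distinct transitions with the same source and letter have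
disjoint guards. -/
def TA.Deterministic {A : Type} (M : TA A) : Prop :=
  ∀ θ₁ ∈ M.trans, ∀ θ₂ ∈ M.trans, θ₁ ≠ θ₂ → θ₁.src = θ₂.src → θ₁.lab = θ₂.lab →
    ∀ x : ℝ≥0, ¬ (θ₁.guard.sat x ∧ θ₂.guard.sat x)

/-- Completeness: every timed word admits a run from the initial configuration. -/
def TA.Complete {A : Type} (M : TA A) : Prop :=
  ∀ w : TimedWord A, ∃ c : M.Q × ℝ≥0, Steps M (M.init, 0) w c

/-- A 1-IRTA: every resetting transition has an equality guard. -/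
def TA.IsIRTA {A : Type} (M : TA A) : Prop :=
  ∀ θ ∈ M.trans, θ.reset = true → ∃ m : ℕ, θ.guard = CC.eq m

/-- Guards allowed in a strict 1-IRTA with constant `K`. -/
def StrictGuard (K : ℕ) (φ : CC) : Prop :=
  (∃ m : ℕ, φ = CC.eq m) ∨ (∃ m : ℕ, φ = CC.and (CC.gt m) (CC.lt (m + 1))) ∨ φ = CC.gt K

/-- Strictness with constant `K`: every guard is of one of the allowed forms
and a guard is an equality iff the transition resets. -/
def TA.IsStrict {A : Type} (M : TA A) (K : ℕ) : Prop :=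
  ∀ θ ∈ M.trans, StrictGuard K θ.guard ∧ ((∃ m : ℕ, θ.guard = CC.eq m) ↔ θ.reset = true)

/-- All constants appearing in guards are at most `K`. -/
def TA.MaxConstLE {A : Type} (M : TA A) (K : ℕ) : Prop :=
  ∀ θ ∈ M.trans, θ.guard.maxConst ≤ K

/-- `M` reaches the same control state on reading `u` and `v` from the initial
configuration. -/
def TA.SameState {A : Type} (M : TA A) (u v : TimedWord A) : Prop :=
  ∃ q : M.Q, ∃ ν ν' : ℝ≥0, Steps M (M.init, 0) u (q, ν) ∧ Steps M (M.init, 0) v (q, ν')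

/-- A `K`-acceptor. -/
def IsKAcceptor {A : Type} (M : TA A) (K : ℕ) : Prop :=
  M.IsFinite ∧ M.Complete ∧ M.Deterministic ∧ M.IsIRTA ∧ M.IsStrict K ∧ M.MaxConstLE K ∧
    ∀ u v : TimedWord A, M.SameState u v → RegEq K (cKW K u) (cKW K v)

/-! ### Equivalences on timed words -/

/-- `L`-preservation of a relation on timed words. -/
def LPreserving {A : Type} (L : Set (TimedWord A)) (r : TimedWord A → TimedWord A → Prop) :
    Prop :=
  ∀ u v : TimedWord A, r u v → (u ∈ L ↔ v ∈ L)

/-- `K`-monotonicity of a relation on timed words. -/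
def KMonotonic {A : Type} (K : ℕ) (r : TimedWord A → TimedWord A → Prop) : Prop :=
  ∀ u v : TimedWord A, r u v →
    RegEq K (cKW K u) (cKW K v) ∧
      ∀ (a : A) (t t' : ℝ≥0), RegEq K (cKW K u + t) (cKW K v + t') →
        r (u ++ [(t, a)]) (v ++ [(t', a)])

/-- Finite index: there are finitely many classes `{v | r u v}`. -/
def FiniteIndex {A : Type} (r : TimedWord A → TimedWord A → Prop) : Prop :=
  Set.Finite (Set.range fun u : TimedWord A => {v : TimedWord A | r u v})

/-! ### The rescaling maps -/

/-- The bijection `f_{λ→λ'}` of the open unit interval. -/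
noncomputable def fScale (lam lam' t : ℝ≥0) : ℝ≥0 :=
  if t ≤ lam then (lam' / lam) * t else lam' + ((1 - lam') / (1 - lam)) * (t - lam)

/-- The new delay `t'` computed from the current clock values `y, y'` and delay `t`. -/
noncomputable def tauStep (K : ℕ) (y y' t : ℝ≥0) : ℝ≥0 :=
  if (IsNatVal y ∧ IsNatVal y') ∨ ((K : ℝ≥0) < y ∧ (K : ℝ≥0) < y') then t
  else (⌊t⌋₊ : ℝ≥0) + fScale (1 - fracPart y) (1 - fracPart y') (fracPart t)

/-- Auxiliary rescaling map on timestamps, carrying the current clock values. -/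
noncomputable def tauAux (K : ℕ) : ℝ≥0 → ℝ≥0 → Timestamp → Timestamp
  | _, _, [] => []
  | y, y', t :: d =>
      tauStep K y y' t ::
        tauAux K (resetStep K (y + t)) (resetStep K (y' + tauStep K y y' t)) d

/-- The rescaling map `τ_{x→x'}` on timestamps. -/
noncomputable def tau (K : ℕ) (x x' : ℝ≥0) (d : Timestamp) : Timestamp :=
  tauAux K (resetStep K x) (resetStep K x') d

/-- Auxiliary rescaling map on timed words. -/
noncomputable def tauWAux {A : Type} (K : ℕ) : ℝ≥0 → ℝ≥0 → TimedWord A → TimedWord A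
  | _, _, [] => []
  | y, y', (t, a) :: w =>
      (tauStep K y y' t, a) ::
        tauWAux K (resetStep K (y + t)) (resetStep K (y' + tauStep K y y' t)) w

/-- The rescaling map `τ_{x→x'}` on timed words. -/
noncomputable def tauW {A : Type} (K : ℕ) (x x' : ℝ≥0) (w : TimedWord A) : TimedWord A :=
  tauWAux K (resetStep K x) (resetStep K x') w

/-! ### Residuals and the syntactic equivalence -/

/-- The residual language `u^{-1}L`. -/
def residual {A : Type} (L : Set (TimedWord A)) (u : TimedWord A) : Set (TimedWord A) :=
  {w : TimedWord A | u ++ w ∈ L}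

/-- The syntactic equivalence `≈^{L,K}`. -/
def ApproxLK {A : Type} (L : Set (TimedWord A)) (K : ℕ) (u v : TimedWord A) : Prop :=
  RegEq K (cKW K u) (cKW K v) ∧
    (tauW K (cKW K u) (cKW K v)) '' (residual L u) = residual L v

/-! ### The automaton built from a monotonic equivalence -/

/-- The region guard `φ([t])`. -/
noncomputable def phiOf (K : ℕ) (t : ℝ≥0) : CC :=
  if t ≤ (K : ℝ≥0) then
    (if IsNatVal t then CC.eq ⌊t⌋₊ else CC.and (CC.gt ⌊t⌋₊) (CC.lt (⌊t⌋₊ + 1)))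
  else CC.gt K

/-- The automaton `A_≈` built from an equivalence `s` on timed words. -/
noncomputable def Aapprox {A : Type} (L : Set (TimedWord A)) (K : ℕ)
    (s : Setoid (TimedWord A)) : TA A where
  Q := Quotient s
  init := Quotient.mk s ([] : TimedWord A)
  final := {q : Quotient s | ∃ u : TimedWord A, q = Quotient.mk s u ∧ u ∈ L}
  trans := {θ : TTrans (Quotient s) A |
    ∃ (u : TimedWord A) (a : A) (t : ℝ≥0),
      θ.src = Quotient.mk s u ∧ θ.dst = Quotient.mk s (u ++ [(t, a)]) ∧ θ.lab = a ∧
      θ.guard = phiOf K (cKW K u + t) ∧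
      (θ.reset = true ↔ ∃ m : ℕ, m ≤ K ∧ cKW K u + t = (m : ℝ≥0))}

/-! ### Half-integral and small words -/

/-- Every delay has fractional part `0` or `1/2`. -/
def HalfIntegral {A : Type} (w : TimedWord A) : Prop :=
  ∀ p ∈ w, fracPart p.1 = 0 ∨ fracPart p.1 = 1 / 2

/-- Every delay is `< K + 1`. -/
def SmallWord {A : Type} (K : ℕ) (w : TimedWord A) : Prop :=
  ∀ p ∈ w, p.1 < (K : ℝ≥0) + 1

/-- The delays of `Σ_K`: half-integral values `≤ K + 1/2`. -/
def IsSigmaK (K : ℕ) (t : ℝ≥0) : Prop :=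
  (fracPart t = 0 ∨ fracPart t = 1 / 2) ∧ t ≤ (K : ℝ≥0) + 1 / 2

/-- Words over `Σ_K` (small half-integral words). -/
def SigmaWord {A : Type} (K : ℕ) (w : TimedWord A) : Prop :=
  ∀ p ∈ w, IsSigmaK K p.1



/-! ### `K`-acceptors with their region representatives -/

/-- A `K`-acceptor bundled with the half-integral representative of the
unique region of each state. -/
structure KAcc (A : Type) (K : ℕ) where
  M : TA A
  acc : IsKAcceptor M K
  reg : M.Q → ℝ≥0
  regHalf : ∀ q : M.Q, fracPart (reg q) = 0 ∨ fracPart (reg q) = 1 / 2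
  regLe : ∀ q : M.Q, reg q ≤ (K : ℝ≥0) + 1 / 2
  regSpec : ∀ (w : TimedWord A) (q : M.Q) (x : ℝ≥0),
    Steps M (M.init, 0) w (q, x) → RegEq K x (reg q)

/-- The minimization equivalences `∼^i` on the states of a `K`-acceptor. -/
def simEq {A : Type} {K : ℕ} (B : KAcc A K) : ℕ → B.M.Q → B.M.Q → Prop
  | 0, p, q => B.reg p = B.reg q ∧ (p ∈ B.M.final ↔ q ∈ B.M.final)
  | i + 1, p, q => simEq B i p q ∧
      ∀ (t : ℝ≥0) (a : A), IsSigmaK K t →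
        ∀ θ₁ θ₂ : TTrans B.M.Q A, θ₁ ∈ B.M.trans → θ₂ ∈ B.M.trans →
          θ₁.src = p → θ₂.src = q → θ₁.lab = a → θ₂.lab = a →
          θ₁.guard = phiOf K t → θ₂.guard = phiOf K t →
          simEq B i θ₁.dst θ₂.dst

/-- The quotient automaton `B/∼^m`. -/
noncomputable def quotTA {A : Type} {K : ℕ} (B : KAcc A K) (m : ℕ) : TA A where
  Q := Quot (simEq B m)
  init := Quot.mk (simEq B m) B.M.init
  final := {c : Quot (simEq B m) | ∃ q ∈ B.M.final, c = Quot.mk (simEq B m) q}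
  trans := {θ : TTrans (Quot (simEq B m)) A |
    ∃ θ₀ ∈ B.M.trans,
      θ.src = Quot.mk (simEq B m) θ₀.src ∧ θ.dst = Quot.mk (simEq B m) θ₀.dst ∧
      θ.lab = θ₀.lab ∧ θ.guard = θ₀.guard ∧ θ.reset = θ₀.reset}

/-! ### Observation tables -/

/-- An observation table over `Σ_K`. -/
structure ObsTable (A : Type) (K : ℕ) where
  U1 : Set (TimedWord A)
  E : Set (TimedWord A)
  val : TimedWord A → TimedWord A → Bool
  U1fin : U1.Finite
  Efin : E.Finite
  U1sigma : ∀ u ∈ U1, SigmaWord K u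
  Esigma : ∀ e ∈ E, SigmaWord K e
  epsU1 : ([] : TimedWord A) ∈ U1
  prefixClosed : ∀ (u : TimedWord A) (x : ℝ≥0 × A), u ++ [x] ∈ U1 → u ∈ U1
  epsE : ([] : TimedWord A) ∈ E
  suffixClosed : ∀ (x : ℝ≥0 × A) (e : TimedWord A), x :: e ∈ E → e ∈ E

/-- The set `U2` of one-letter `Σ_K`-extensions of `U1`. -/
def obsU2 {A : Type} {K : ℕ} (T : ObsTable A K) : Set (TimedWord A) :=
  {w : TimedWord A | ∃ u ∈ T.U1, ∃ (t : ℝ≥0) (a : A), IsSigmaK K t ∧ w = u ++ [(t, a)]}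

/-- `R(u)`: the row of `u` (restricted to `E`) together with `c^K_⊤(u)`. -/
noncomputable def Rof {A : Type} {K : ℕ} (T : ObsTable A K) (u : TimedWord A) :
    ({e : TimedWord A // e ∈ T.E} → Bool) × WithTop ℝ≥0 :=
  (fun e => T.val u e.1, cKTop K u)

/-- The table is closed. -/
def ObsTable.Closed {A : Type} {K : ℕ} (T : ObsTable A K) : Prop :=
  ∀ w ∈ obsU2 T, ∃ u ∈ T.U1, Rof T w = Rof T u

/-- The table is consistent. -/
def ObsTable.Consistent {A : Type} {K : ℕ} (T : ObsTable A K) : Prop :=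
  ∀ u ∈ T.U1, ∀ w ∈ T.U1, Rof T u = Rof T w →
    ∀ (t : ℝ≥0) (a : A), IsSigmaK K t → Rof T (u ++ [(t, a)]) = Rof T (w ++ [(t, a)])

/-- The automaton `A_𝒯` induced by a (closed and consistent) observation table. -/
noncomputable def ATable {A : Type} {K : ℕ} (T : ObsTable A K) : TA A where
  Q := {f : ({e : TimedWord A // e ∈ T.E} → Bool) × WithTop ℝ≥0 // ∃ u ∈ T.U1, f = Rof T u}
  init := ⟨Rof T [], ⟨[], T.epsU1, rfl⟩⟩
  final := {q | ∃ u ∈ T.U1, q.1 = Rof T u ∧ T.val u [] = true}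
  trans := {θ | ∃ u ∈ T.U1, ∃ (t : ℝ≥0) (a : A), IsSigmaK K t ∧
      θ.src.1 = Rof T u ∧ θ.dst.1 = Rof T (u ++ [(t, a)]) ∧ θ.lab = a ∧
      θ.guard = phiOf K (cKW K u + t) ∧
      (θ.reset = true ↔ ∃ m : ℕ, m ≤ K ∧ cKW K u + t = (m : ℝ≥0))}

/-- A `K`-acceptor is consistent with the observation table `𝒯`. -/
def ConsistentWith {A : Type} {K : ℕ} (M : TA A) (T : ObsTable A K) : Prop :=
  ∀ w : TimedWord A, (w ∈ T.U1 ∨ w ∈ obsU2 T) → ∀ e ∈ T.E,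
    ∀ (q : M.Q) (ν : ℝ≥0), Steps M (M.init, 0) (w ++ e) (q, ν) →
      (q ∈ M.final ↔ T.val w e = true)

/-- Isomorphism of one-clock timed automata. -/
structure TAIso {A : Type} (M N : TA A) where
  toEquiv : M.Q ≃ N.Q
  init_eq : toEquiv M.init = N.init
  final_iff : ∀ q : M.Q, q ∈ M.final ↔ toEquiv q ∈ N.final
  trans_iff : ∀ θ : TTrans M.Q A,
    θ ∈ M.trans ↔
      (⟨toEquiv θ.src, toEquiv θ.dst, θ.lab, θ.guard, θ.reset⟩ : TTrans N.Q A) ∈ N.trans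


section Lemmas




lemma floor_cast_le (x : ℝ≥0) : (⌊x⌋₊ : ℝ≥0) ≤ x := Nat.floor_le x.2

lemma floor_add_fracPart (x : ℝ≥0) : (⌊x⌋₊ : ℝ≥0) + fracPart x = x := by
  rw [fracPart, add_tsub_cancel_of_le (floor_cast_le x)]

lemma fracPart_lt_one (x : ℝ≥0) : fracPart x < 1 := by
  have h := Nat.lt_floor_add_one x
  rw [fracPart]
  exact tsub_lt_iff_left (floor_cast_le x) |>.mpr (by rw [add_comm] at h ⊢; exact h)

lemma fracPart_eq_zero_iff {x : ℝ≥0} : fracPart x = 0 ↔ IsNatVal x := by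
  constructor
  · intro h
    exact ⟨⌊x⌋₊, by conv_lhs => rw [← floor_add_fracPart x, h, add_zero]⟩
  · rintro ⟨m, rfl⟩
    simp [fracPart, Nat.floor_natCast]

lemma fracPart_add_nat (n : ℕ) (f : ℝ≥0) (hf : f < 1) :
    ⌊(n : ℝ≥0) + f⌋₊ = n ∧ fracPart ((n : ℝ≥0) + f) = f := by
  have hfl : ⌊(n : ℝ≥0) + f⌋₊ = n := by
    rw [Nat.floor_eq_iff (by positivity)]
    constructor
    · exact le_add_of_le_of_nonneg le_rfl f.2
    · exact add_lt_add_right hf _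
  refine ⟨hfl, ?_⟩
  rw [fracPart, hfl, add_tsub_cancel_left]

lemma fracPart_floor_add (x : ℝ≥0) (n : ℕ) :
    ⌊x + (n : ℝ≥0)⌋₊ = ⌊x⌋₊ + n ∧ fracPart (x + n) = fracPart x := by
  have h1 : x + (n : ℝ≥0) = ((⌊x⌋₊ + n : ℕ) : ℝ≥0) + fracPart x := by
    push_cast
    rw [add_right_comm, floor_add_fracPart]
  rw [h1]
  exact fracPart_add_nat _ _ (fracPart_lt_one x)


lemma eq_nat_iff {x : ℝ≥0} {m : ℕ} : x = (m : ℝ≥0) ↔ ⌊x⌋₊ = m ∧ fracPart x = 0 := by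
  constructor
  · rintro rfl; simp [fracPart]
  · rintro ⟨h1, h2⟩
    conv_lhs => rw [← floor_add_fracPart x, h1, h2, add_zero]

lemma gt_nat_iff {x : ℝ≥0} {m : ℕ} : (m : ℝ≥0) < x ↔ m < ⌊x⌋₊ ∨ (⌊x⌋₊ = m ∧ fracPart x ≠ 0) := by
  constructor
  · intro h
    rcases lt_or_ge m ⌊x⌋₊ with h'|h'
    · exact Or.inl h'
    · have hm : ⌊x⌋₊ = m := le_antisymm h' (Nat.le_floor h.le)
      refine Or.inr ⟨hm, fun hz => ?_⟩
      have := (eq_nat_iff).mpr ⟨hm, hz⟩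
      rw [this] at h; exact lt_irrefl _ h
  · rintro (h|⟨h1,h2⟩)
    · calc (m : ℝ≥0) < ⌊x⌋₊ := by exact_mod_cast h
        _ ≤ x := floor_cast_le x
    · rcases lt_or_ge (m : ℝ≥0) x with h|h
      · exact h
      · exfalso
        have hx : x = (m : ℝ≥0) := le_antisymm h (h1 ▸ floor_cast_le x)
        exact h2 ((eq_nat_iff.mp hx).2)

/-- region data determines `> K` -/
lemma regeq_gtK {K : ℕ} {x y : ℝ≥0} (h : RegEq K x y) : ((K:ℝ≥0) < x ↔ (K:ℝ≥0) < y) := by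
  rcases h with ⟨h1, h2⟩ | ⟨h1, h2⟩
  · rw [gt_nat_iff, gt_nat_iff, h1]
    constructor
    · rintro (h|⟨ha,hb⟩); exact Or.inl h
      exact Or.inr ⟨ha, fun hz => hb (h2.mpr hz)⟩
    · rintro (h|⟨ha,hb⟩); exact Or.inl h
      exact Or.inr ⟨ha, fun hz => hb (h2.mp hz)⟩
  · exact ⟨fun _ => h2, fun _ => h1⟩

lemma regeq_eq_nat {K : ℕ} {x y : ℝ≥0} (h : RegEq K x y) {m : ℕ} (hm : m ≤ K) :
    x = (m : ℝ≥0) ↔ y = (m : ℝ≥0) := by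
  rcases h with ⟨h1, h2⟩ | ⟨h1, h2⟩
  · rw [eq_nat_iff, eq_nat_iff, h1]
    exact and_congr_right fun _ => h2
  · constructor <;> intro h
    · exact absurd (h ▸ h1) (not_lt.mpr (by exact_mod_cast hm))
    · exact absurd (h ▸ h2) (not_lt.mpr (by exact_mod_cast hm))

lemma regeq_natval {K : ℕ} {x y : ℝ≥0} (h : RegEq K x y)
    (hx : IsNatVal x) (hK : x ≤ (K:ℝ≥0)) : IsNatVal y ∧ y = x := by
  obtain ⟨m, rfl⟩ := hx
  have hm : m ≤ K := by exact_mod_cast hK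
  have := (regeq_eq_nat h hm).mp rfl
  exact ⟨⟨m, this⟩, this⟩

lemma regeq_refl (K : ℕ) (x : ℝ≥0) : RegEq K x x := Or.inl ⟨rfl, Iff.rfl⟩

lemma regeq_symm {K : ℕ} {x y : ℝ≥0} (h : RegEq K x y) : RegEq K y x := by
  rcases h with ⟨h1,h2⟩|⟨h1,h2⟩
  · exact Or.inl ⟨h1.symm, h2.symm⟩
  · exact Or.inr ⟨h2, h1⟩

lemma regeq_trans {K : ℕ} {x y z : ℝ≥0} (h : RegEq K x y) (h' : RegEq K y z) : RegEq K x z := by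
  rcases h with ⟨h1,h2⟩|⟨h1,h2⟩
  · rcases h' with ⟨h3,h4⟩|⟨h3,h4⟩
    · exact Or.inl ⟨h1.trans h3, h2.trans h4⟩
    · exact Or.inr ⟨(regeq_gtK (Or.inl ⟨h1,h2⟩)).mpr h3, h4⟩
  · rcases h' with ⟨h3,h4⟩|⟨h3,h4⟩
    · exact Or.inr ⟨h1, (regeq_gtK (Or.inl ⟨h3,h4⟩)).mp h2⟩
    · exact Or.inr ⟨h1, h4⟩

lemma resetStep_eq_zero {K : ℕ} {v : ℝ≥0} (h : ∃ m : ℕ, m ≤ K ∧ v = (m : ℝ≥0)) :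
    resetStep K v = 0 := by rw [resetStep, if_pos h]

lemma resetStep_eq_self {K : ℕ} {v : ℝ≥0} (h : ¬ ∃ m : ℕ, m ≤ K ∧ v = (m : ℝ≥0)) :
    resetStep K v = v := by rw [resetStep, if_neg h]

lemma resetStep_idem (K : ℕ) (v : ℝ≥0) : resetStep K (resetStep K v) = resetStep K v := by
  by_cases h : ∃ m : ℕ, m ≤ K ∧ v = (m : ℝ≥0)
  · rw [resetStep_eq_zero h, resetStep_eq_zero ⟨0, Nat.zero_le _, by simp⟩]
  · rw [resetStep_eq_self h, resetStep_eq_self h]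

lemma resetStep_regeq {K : ℕ} {x y : ℝ≥0} (h : RegEq K x y) :
    RegEq K (resetStep K x) (resetStep K y) := by
  by_cases hx : ∃ m : ℕ, m ≤ K ∧ x = (m : ℝ≥0)
  · obtain ⟨m, hm, hxm⟩ := hx
    have hy : y = (m:ℝ≥0) := (regeq_eq_nat h hm).mp hxm
    rw [resetStep_eq_zero ⟨m,hm,hxm⟩, resetStep_eq_zero ⟨m,hm,hy⟩]
    exact regeq_refl K 0
  · have hy : ¬ ∃ m : ℕ, m ≤ K ∧ y = (m : ℝ≥0) := by
      rintro ⟨m, hm, hym⟩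
      exact hx ⟨m, hm, (regeq_eq_nat h hm).mpr hym⟩
    rw [resetStep_eq_self hx, resetStep_eq_self hy]
    exact h




section fScale
variable {lam lam' lam'' f : ℝ≥0}

lemma fScale_lt_of_lt (h0' : 0 < lam') (hf : f < lam) : fScale lam lam' f < lam' := by
  rw [fScale, if_pos hf.le]
  have h0 : 0 < lam := lt_of_le_of_lt f.2 hf
  calc (lam' / lam) * f < (lam' / lam) * lam := by
        exact mul_lt_mul_of_pos_left hf (div_pos h0' h0)
    _ = lam' := div_mul_cancel₀ _ h0.ne'

lemma fScale_eq_of_eq (h0 : 0 < lam) : fScale lam lam' lam = lam' := by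
  rw [fScale, if_pos le_rfl, div_mul_cancel₀ _ h0.ne']

lemma fScale_gt_of_gt (h1 : lam < 1) (h1' : lam' < 1) (hf : lam < f) :
    lam' < fScale lam lam' f := by
  rw [fScale, if_neg (not_le.mpr hf)]
  have hc : 0 < (1 - lam') / (1 - lam) := div_pos (tsub_pos_of_lt h1') (tsub_pos_of_lt h1)
  have : 0 < ((1 - lam') / (1 - lam)) * (f - lam) := mul_pos hc (tsub_pos_of_lt hf)
  exact lt_add_of_pos_right _ this

lemma fScale_lt_one (h0' : 0 < lam') (h1 : lam < 1) (h1' : lam' < 1) (hf : f < 1) :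
    fScale lam lam' f < 1 := by
  rw [fScale]
  split_ifs with h
  · have key : (lam' / lam) * f ≤ lam' := by
      have h2 : (lam' / lam) * f ≤ (lam' / lam) * lam :=
        mul_le_mul_of_nonneg_left h zero_le
      rcases eq_or_lt_of_le (zero_le : 0 ≤ lam) with h0|h0
      · refine le_trans h2 ?_
        simp [← h0]
      · rw [div_mul_cancel₀ _ h0.ne'] at h2
        exact h2
    exact lt_of_le_of_lt key h1'
  · push_neg at h
    calc lam' + ((1 - lam') / (1 - lam)) * (f - lam)
        < lam' + ((1 - lam') / (1 - lam)) * (1 - lam) := by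
          refine add_lt_add_right (mul_lt_mul_of_pos_left ?_ ?_) _
          · exact tsub_lt_tsub_right_of_le h.le hf
          · exact div_pos (tsub_pos_of_lt h1') (tsub_pos_of_lt h1)
      _ = lam' + (1 - lam') := by
          rw [div_mul_cancel₀ _ (tsub_pos_of_lt h1).ne']
      _ = 1 := add_tsub_cancel_of_le h1'.le

lemma fScale_self (h0 : 0 < lam) (h1 : lam < 1) : fScale lam lam f = f := by
  rw [fScale]
  split_ifs with h
  · rw [div_self h0.ne', one_mul]
  · push_neg at h
    rw [div_self (tsub_pos_of_lt h1).ne', one_mul, add_tsub_cancel_of_le h.le]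

lemma fScale_comp (h0 : 0 < lam) (h1 : lam < 1) (h0' : 0 < lam') (h1' : lam' < 1) :
    fScale lam' lam'' (fScale lam lam' f) = fScale lam lam'' f := by
  rcases lt_trichotomy f lam with hf|hf|hf
  · have h2 : fScale lam lam' f = (lam' / lam) * f := by rw [fScale, if_pos hf.le]
    have h3 : fScale lam lam' f ≤ lam' := (fScale_lt_of_lt h0' hf).le
    rw [fScale, if_pos h3, h2, fScale, if_pos hf.le]
    rw [← mul_assoc, div_mul_div_comm, mul_comm lam'' lam', mul_div_mul_left _ _ h0'.ne']
  · subst hf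
    rw [fScale_eq_of_eq h0, fScale_eq_of_eq h0', fScale_eq_of_eq h0]
  · have h2 : fScale lam lam' f = lam' + ((1 - lam') / (1 - lam)) * (f - lam) := by
      rw [fScale, if_neg (not_le.mpr hf)]
    have h3 : ¬ fScale lam lam' f ≤ lam' := not_le.mpr (fScale_gt_of_gt h1 h1' hf)
    rw [fScale, if_neg h3, h2, add_tsub_cancel_left, fScale, if_neg (not_le.mpr hf)]
    rw [← mul_assoc, div_mul_div_comm, mul_comm (1-lam'') (1-lam'),
      mul_div_mul_left _ _ (tsub_pos_of_lt h1').ne']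

lemma fScale_inv (h0 : 0 < lam) (h1 : lam < 1) (h0' : 0 < lam') (h1' : lam' < 1) :
    fScale lam' lam (fScale lam lam' f) = f := by
  rw [fScale_comp h0 h1 h0' h1', fScale_self h0 h1]

end fScale


lemma fracPart_natCast (n : ℕ) : fracPart (n : ℝ≥0) = 0 := by
  simp [fracPart, Nat.floor_natCast]

lemma add_floor_frac_lt {x t : ℝ≥0} (h : fracPart x + fracPart t < 1) :
    ⌊x + t⌋₊ = ⌊x⌋₊ + ⌊t⌋₊ ∧ fracPart (x + t) = fracPart x + fracPart t := by
  have hd : x + t = ((⌊x⌋₊ + ⌊t⌋₊ : ℕ) : ℝ≥0) + (fracPart x + fracPart t) := by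
    push_cast
    rw [add_add_add_comm, floor_add_fracPart, floor_add_fracPart]
  rw [hd]
  exact fracPart_add_nat _ _ h

lemma add_floor_frac_ge {x t : ℝ≥0} (h : 1 ≤ fracPart x + fracPart t) :
    ⌊x + t⌋₊ = ⌊x⌋₊ + ⌊t⌋₊ + 1 ∧ fracPart (x + t) = fracPart x + fracPart t - 1 := by
  have h2 : fracPart x + fracPart t - 1 < 1 := by
    have := add_lt_add (fracPart_lt_one x) (fracPart_lt_one t)
    rw [tsub_lt_iff_left h]
    calc fracPart x + fracPart t < 1 + 1 := this
      _ = 1 + 1 := rfl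
  have hd : x + t = ((⌊x⌋₊ + ⌊t⌋₊ + 1 : ℕ) : ℝ≥0) + (fracPart x + fracPart t - 1) := by
    push_cast
    rw [add_assoc ((⌊x⌋₊:ℝ≥0) + (⌊t⌋₊:ℝ≥0)), add_tsub_cancel_of_le h,
      add_add_add_comm, floor_add_fracPart, floor_add_fracPart]
  rw [hd]
  exact fracPart_add_nat _ _ h2

/-- Case analysis for normalized region-equivalent pairs. -/
lemma tauStep_cases {K : ℕ} {x y : ℝ≥0} (hx : resetStep K x = x) (hy : resetStep K y = y)
    (h : RegEq K x y) :
    (x = 0 ∧ y = 0) ∨ ((K : ℝ≥0) < x ∧ (K : ℝ≥0) < y) ∨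
      (⌊x⌋₊ = ⌊y⌋₊ ∧ fracPart x ≠ 0 ∧ fracPart y ≠ 0 ∧ ¬ (K : ℝ≥0) < x ∧ ¬ (K : ℝ≥0) < y) := by
  by_cases hgt : (K : ℝ≥0) < x
  · exact Or.inr (Or.inl ⟨hgt, (regeq_gtK h).mp hgt⟩)
  · have hgty : ¬ (K : ℝ≥0) < y := fun hy' => hgt ((regeq_gtK h).mpr hy')
    by_cases hnx : IsNatVal x
    · obtain ⟨hny, hyx⟩ := regeq_natval h hnx (not_lt.mp hgt)
      obtain ⟨m, rfl⟩ := hnx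
      have hm : m ≤ K := by exact_mod_cast (not_lt.mp hgt)
      have hx0 : (m : ℝ≥0) = 0 := by
        rw [← hx]; exact resetStep_eq_zero ⟨m, hm, rfl⟩
      exact Or.inl ⟨hx0, by rw [hyx, hx0]⟩
    · have hfx : fracPart x ≠ 0 := fun hz => hnx (fracPart_eq_zero_iff.mp hz)
      have hny : ¬ IsNatVal y := by
        intro hny
        obtain ⟨_, hxy⟩ := regeq_natval (regeq_symm h) hny (not_lt.mp hgty)
        exact hnx (hxy ▸ hny)
      have hfy : fracPart y ≠ 0 := fun hz => hny (fracPart_eq_zero_iff.mp hz)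
      rcases h with ⟨h1, _⟩ | ⟨h1, _⟩
      · exact Or.inr (Or.inr ⟨h1, hfx, hfy, hgt, hgty⟩)
      · exact absurd h1 hgt

/-- Key lemma: `tauStep` preserves region equivalence after addition. -/
lemma tauStep_regeq {K : ℕ} {x y : ℝ≥0} (hx : resetStep K x = x) (hy : resetStep K y = y)
    (h : RegEq K x y) (t : ℝ≥0) : RegEq K (x + t) (y + tauStep K x y t) := by
  rcases tauStep_cases hx hy h with ⟨hx0, hy0⟩ | ⟨hgx, hgy⟩ | ⟨hfl, hfx, hfy, hgx, hgy⟩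
  · subst hx0; subst hy0
    rw [tauStep, if_pos (Or.inl ⟨⟨0, by simp⟩, ⟨0, by simp⟩⟩)]
    exact regeq_refl _ _
  · rw [tauStep, if_pos (Or.inr ⟨hgx, hgy⟩)]
    exact Or.inr ⟨lt_of_lt_of_le hgx le_self_add, lt_of_lt_of_le hgy le_self_add⟩
  · have hcond : ¬ ((IsNatVal x ∧ IsNatVal y) ∨ ((K : ℝ≥0) < x ∧ (K : ℝ≥0) < y)) := by
      rintro (⟨hnx, _⟩ | ⟨h1, _⟩)
      · exact hfx (fracPart_eq_zero_iff.mpr hnx)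
      · exact hgx h1
    rw [tauStep, if_neg hcond]
    set lam := 1 - fracPart x with hlam
    set lam' := 1 - fracPart y with hlam'
    set f := fracPart t with hf
    have hl0 : 0 < lam := tsub_pos_of_lt (fracPart_lt_one x)
    have hl1 : lam < 1 := tsub_lt_self one_pos (pos_iff_ne_zero.mpr hfx)
    have hl0' : 0 < lam' := tsub_pos_of_lt (fracPart_lt_one y)
    have hl1' : lam' < 1 := tsub_lt_self one_pos (pos_iff_ne_zero.mpr hfy)
    set f' := fScale lam lam' f with hf'
    have hfone : f < 1 := fracPart_lt_one t
    have hf'one : f' < 1 := fScale_lt_one hl0' hl1 hl1' hfone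
    have ht' : ⌊(⌊t⌋₊ : ℝ≥0) + f'⌋₊ = ⌊t⌋₊ ∧ fracPart ((⌊t⌋₊ : ℝ≥0) + f') = f' :=
      fracPart_add_nat _ _ hf'one
    have hxfl : fracPart x + lam = 1 := add_tsub_cancel_of_le (fracPart_lt_one x).le
    have hyfl : fracPart y + lam' = 1 := add_tsub_cancel_of_le (fracPart_lt_one y).le
    rcases lt_trichotomy f lam with hc | hc | hc
    · -- no carry on either side
      have hs : fracPart x + f < 1 := by rw [← hxfl]; exact add_lt_add_right hc _
      have hf'lt : f' < lam' := fScale_lt_of_lt hl0' hc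
      have hs' : fracPart y + f' < 1 := by rw [← hyfl]; exact add_lt_add_right hf'lt _
      obtain ⟨e1, e2⟩ := add_floor_frac_lt (x := x) (t := t) hs
      obtain ⟨e1', e2'⟩ := add_floor_frac_lt (x := y) (t := (⌊t⌋₊ : ℝ≥0) + f') (by rw [ht'.2]; exact hs')
      refine Or.inl ⟨?_, ?_⟩
      · rw [e1, e1', hfl, ht'.1]
      · rw [e2, e2', ht'.2]
        constructor <;> intro hz
        · exact absurd (add_eq_zero.mp hz).1 hfx
        · exact absurd (add_eq_zero.mp hz).1 hfy
    · -- carry, landing exactly on an integer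
      have hs : (1:ℝ≥0) ≤ fracPart x + f := by rw [hc]; exact hxfl.symm.le
      have hfeq : f' = lam' := by rw [hf', hc]; exact fScale_eq_of_eq hl0
      have hs' : (1:ℝ≥0) ≤ fracPart y + f' := by rw [hfeq]; exact le_of_eq hyfl.symm
      obtain ⟨e1, e2⟩ := add_floor_frac_ge (x := x) (t := t) hs
      obtain ⟨e1', e2'⟩ := add_floor_frac_ge (x := y) (t := (⌊t⌋₊ : ℝ≥0) + f') (by rw [ht'.2]; exact hs')
      refine Or.inl ⟨?_, ?_⟩
      · rw [e1, e1', hfl, ht'.1]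
      · rw [e2, e2', ht'.2, ← hf, hc, hxfl, hfeq, hyfl, tsub_self]
    · -- carry, strictly past an integer
      have hs : (1:ℝ≥0) ≤ fracPart x + f := by
        rw [← hxfl]; exact add_le_add_right hc.le _
      have hf'gt : lam' < f' := fScale_gt_of_gt hl1 hl1' hc
      have hs' : (1:ℝ≥0) ≤ fracPart y + f' := by
        rw [← hyfl]; exact add_le_add_right hf'gt.le _
      obtain ⟨e1, e2⟩ := add_floor_frac_ge (x := x) (t := t) hs
      obtain ⟨e1', e2'⟩ := add_floor_frac_ge (x := y) (t := (⌊t⌋₊ : ℝ≥0) + f') (by rw [ht'.2]; exact hs')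
      have hz1 : fracPart x + f - 1 ≠ 0 := by
        have : (1:ℝ≥0) < fracPart x + f := by rw [← hxfl]; exact add_lt_add_right hc _
        exact (tsub_pos_of_lt this).ne'
      have hz2 : fracPart y + f' - 1 ≠ 0 := by
        have : (1:ℝ≥0) < fracPart y + f' := by rw [← hyfl]; exact add_lt_add_right hf'gt _
        exact (tsub_pos_of_lt this).ne'
      refine Or.inl ⟨?_, ?_⟩
      · rw [e1, e1', hfl, ht'.1]
      · rw [e2, e2', ht'.2]
        exact ⟨fun hz => absurd hz hz1, fun hz => absurd hz hz2⟩


lemma notnat_of_frac {x : ℝ≥0} (h : fracPart x ≠ 0) : ¬ IsNatVal x :=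
  fun hn => h (fracPart_eq_zero_iff.mpr hn)

lemma tauStep_pos {K : ℕ} {x y : ℝ≥0}
    (hc : (IsNatVal x ∧ IsNatVal y) ∨ ((K : ℝ≥0) < x ∧ (K : ℝ≥0) < y)) (t : ℝ≥0) :
    tauStep K x y t = t := by rw [tauStep, if_pos hc]

lemma tauStep_neg {K : ℕ} {x y : ℝ≥0}
    (hc : ¬ ((IsNatVal x ∧ IsNatVal y) ∨ ((K : ℝ≥0) < x ∧ (K : ℝ≥0) < y))) (t : ℝ≥0) :
    tauStep K x y t = (⌊t⌋₊ : ℝ≥0) + fScale (1 - fracPart x) (1 - fracPart y) (fracPart t) := by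
  rw [tauStep, if_neg hc]

lemma tauStep_inv {K : ℕ} {x y : ℝ≥0} (hx : resetStep K x = x) (hy : resetStep K y = y)
    (h : RegEq K x y) (t : ℝ≥0) : tauStep K y x (tauStep K x y t) = t := by
  rcases tauStep_cases hx hy h with ⟨hx0, hy0⟩ | ⟨hgx, hgy⟩ | ⟨hfl, hfx, hfy, hgx, hgy⟩
  · subst hx0; subst hy0
    rw [tauStep_pos (Or.inl ⟨⟨0, by simp⟩, ⟨0, by simp⟩⟩),
      tauStep_pos (Or.inl ⟨⟨0, by simp⟩, ⟨0, by simp⟩⟩)]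
  · rw [tauStep_pos (Or.inr ⟨hgx, hgy⟩), tauStep_pos (Or.inr ⟨hgy, hgx⟩)]
  · have hcond : ¬ ((IsNatVal x ∧ IsNatVal y) ∨ ((K : ℝ≥0) < x ∧ (K : ℝ≥0) < y)) := by
      rintro (⟨hnx, _⟩ | ⟨h1, _⟩)
      · exact notnat_of_frac hfx hnx
      · exact hgx h1
    have hcond' : ¬ ((IsNatVal y ∧ IsNatVal x) ∨ ((K : ℝ≥0) < y ∧ (K : ℝ≥0) < x)) := by
      rintro (⟨hny, _⟩ | ⟨h1, _⟩)
      · exact notnat_of_frac hfy hny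
      · exact hgy h1
    have hl0 : 0 < 1 - fracPart x := tsub_pos_of_lt (fracPart_lt_one x)
    have hl1 : 1 - fracPart x < 1 := tsub_lt_self one_pos (pos_iff_ne_zero.mpr hfx)
    have hl0' : 0 < 1 - fracPart y := tsub_pos_of_lt (fracPart_lt_one y)
    have hl1' : 1 - fracPart y < 1 := tsub_lt_self one_pos (pos_iff_ne_zero.mpr hfy)
    rw [tauStep_neg hcond, tauStep_neg hcond']
    have hfs : fScale (1 - fracPart x) (1 - fracPart y) (fracPart t) < 1 :=
      fScale_lt_one hl0' hl1 hl1' (fracPart_lt_one t)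
    obtain ⟨e1, e2⟩ := fracPart_add_nat ⌊t⌋₊ _ hfs
    rw [e1, e2, fScale_inv hl0 hl1 hl0' hl1', floor_add_fracPart]

lemma tauStep_comp {K : ℕ} {x y z : ℝ≥0} (hx : resetStep K x = x) (hy : resetStep K y = y)
    (hz : resetStep K z = z) (hxy : RegEq K x y) (hyz : RegEq K y z) (t : ℝ≥0) :
    tauStep K y z (tauStep K x y t) = tauStep K x z t := by
  rcases tauStep_cases hx hy hxy with ⟨hx0, hy0⟩ | ⟨hgx, hgy⟩ | ⟨hfl, hfx, hfy, hgx, hgy⟩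
  · have hz0 : z = 0 := by
      rcases tauStep_cases hy hz hyz with ⟨_, h0⟩ | ⟨hg, _⟩ | ⟨_, hf, _⟩
      · exact h0
      · exact absurd (hy0 ▸ hg) (by simp)
      · exact absurd (hy0 ▸ hf) (by simp [fracPart])
    subst hx0; subst hy0; subst hz0
    rw [tauStep_pos (Or.inl ⟨⟨0, by simp⟩, ⟨0, by simp⟩⟩),
      tauStep_pos (Or.inl ⟨⟨0, by simp⟩, ⟨0, by simp⟩⟩)]
  · have hgz : (K : ℝ≥0) < z := (regeq_gtK hyz).mp hgy
    rw [tauStep_pos (Or.inr ⟨hgx, hgy⟩), tauStep_pos (Or.inr ⟨hgy, hgz⟩),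
      tauStep_pos (Or.inr ⟨hgx, hgz⟩)]
  · have h3 : ⌊y⌋₊ = ⌊z⌋₊ ∧ fracPart z ≠ 0 ∧ ¬ (K : ℝ≥0) < z := by
      rcases tauStep_cases hy hz hyz with ⟨h0, _⟩ | ⟨hg, _⟩ | ⟨a, _, b, _, c⟩
      · exact absurd (h0 ▸ hfy) (by simp [fracPart])
      · exact absurd hg hgy
      · exact ⟨a, b, c⟩
    obtain ⟨hfl', hfz, hgz⟩ := h3
    have hcond : ¬ ((IsNatVal x ∧ IsNatVal y) ∨ ((K : ℝ≥0) < x ∧ (K : ℝ≥0) < y)) := by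
      rintro (⟨hnx, _⟩ | ⟨h1, _⟩)
      · exact notnat_of_frac hfx hnx
      · exact hgx h1
    have hcond' : ¬ ((IsNatVal y ∧ IsNatVal z) ∨ ((K : ℝ≥0) < y ∧ (K : ℝ≥0) < z)) := by
      rintro (⟨hny, _⟩ | ⟨h1, _⟩)
      · exact notnat_of_frac hfy hny
      · exact hgy h1
    have hcond'' : ¬ ((IsNatVal x ∧ IsNatVal z) ∨ ((K : ℝ≥0) < x ∧ (K : ℝ≥0) < z)) := by
      rintro (⟨hnx, _⟩ | ⟨h1, _⟩)
      · exact notnat_of_frac hfx hnx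
      · exact hgx h1
    have hl0 : 0 < 1 - fracPart x := tsub_pos_of_lt (fracPart_lt_one x)
    have hl1 : 1 - fracPart x < 1 := tsub_lt_self one_pos (pos_iff_ne_zero.mpr hfx)
    have hl0' : 0 < 1 - fracPart y := tsub_pos_of_lt (fracPart_lt_one y)
    have hl1' : 1 - fracPart y < 1 := tsub_lt_self one_pos (pos_iff_ne_zero.mpr hfy)
    rw [tauStep_neg hcond, tauStep_neg hcond', tauStep_neg hcond'']
    have hfs : fScale (1 - fracPart x) (1 - fracPart y) (fracPart t) < 1 :=
      fScale_lt_one hl0' hl1 hl1' (fracPart_lt_one t)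
    obtain ⟨e1, e2⟩ := fracPart_add_nat ⌊t⌋₊ _ hfs
    rw [e1, e2, fScale_comp hl0 hl1 hl0' hl1']



/-! ### Word-level tau lemmas -/

lemma tauWAux_inv {A : Type} (K : ℕ) :
    ∀ (w : TimedWord A) (x y : ℝ≥0), resetStep K x = x → resetStep K y = y → RegEq K x y →
      tauWAux K y x (tauWAux K x y w) = w
  | [], _, _, _, _, _ => rfl
  | (t, a) :: w, x, y, hx, hy, h => by
    simp only [tauWAux]
    rw [tauStep_inv hx hy h]
    exact congrArg _ (tauWAux_inv K w _ _ (resetStep_idem _ _) (resetStep_idem _ _)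
      (resetStep_regeq (tauStep_regeq hx hy h t)))

lemma tauWAux_comp {A : Type} (K : ℕ) :
    ∀ (w : TimedWord A) (x y z : ℝ≥0), resetStep K x = x → resetStep K y = y →
      resetStep K z = z → RegEq K x y → RegEq K y z →
      tauWAux K y z (tauWAux K x y w) = tauWAux K x z w
  | [], _, _, _, _, _, _, _, _ => rfl
  | (t, a) :: w, x, y, z, hx, hy, hz, hxy, hyz => by
    simp only [tauWAux]
    rw [tauStep_comp hx hy hz hxy hyz]
    have h2 := tauStep_regeq hy hz hyz (tauStep K x y t)
    rw [tauStep_comp hx hy hz hxy hyz] at h2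
    exact congrArg _ (tauWAux_comp K w _ _ _ (resetStep_idem _ _) (resetStep_idem _ _)
      (resetStep_idem _ _) (resetStep_regeq (tauStep_regeq hx hy hxy t))
      (resetStep_regeq h2))

/-! ### cK normalization -/

lemma cKAux_norm (K : ℕ) :
    ∀ (d : Timestamp) (v : ℝ≥0), resetStep K v = v → resetStep K (cKAux K v d) = cKAux K v d
  | [], _, hv => hv
  | _ :: d, v, _ => cKAux_norm K d _ (resetStep_idem _ _)

lemma resetStep_zero (K : ℕ) : resetStep K (0 : ℝ≥0) = 0 :=
  resetStep_eq_zero ⟨0, Nat.zero_le _, by simp⟩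

lemma resetStep_cKW {A : Type} (K : ℕ) (u : TimedWord A) :
    resetStep K (cKW K u) = cKW K u :=
  cKAux_norm K _ _ (resetStep_zero K)

lemma tauW_eq_aux {A : Type} {K : ℕ} {x y : ℝ≥0} (hx : resetStep K x = x)
    (hy : resetStep K y = y) (w : TimedWord A) : tauW K x y w = tauWAux K x y w := by
  rw [tauW, hx, hy]

lemma tauW_funext (A : Type) {K : ℕ} {x y : ℝ≥0} (hx : resetStep K x = x)
    (hy : resetStep K y = y) :
    (tauW K x y : TimedWord A → TimedWord A) = tauWAux K x y :=
  funext fun w => tauW_eq_aux hx hy w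

/-! ### Canonical half-integral representatives -/

noncomputable def canon (K : ℕ) (a : ℝ≥0) : ℝ≥0 :=
  if (K : ℝ≥0) < a then (K : ℝ≥0) + 1/2
  else if fracPart a = 0 then a else (⌊a⌋₊ : ℝ≥0) + 1/2

def HG (K : ℕ) (x : ℝ≥0) : Prop :=
  x ≤ (K : ℝ≥0) + 1/2 ∧ (x = 0 ∨ fracPart x = 1/2)

lemma half_lt_one : (1:ℝ≥0)/2 < 1 := by
  rw [← NNReal.coe_lt_coe]
  norm_num

lemma half_pos' : (0:ℝ≥0) < 1/2 := by
  rw [← NNReal.coe_lt_coe]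
  norm_num

lemma frac_add_half (n : ℕ) : fracPart ((n : ℝ≥0) + 1/2) = 1/2 :=
  (fracPart_add_nat n ((1:ℝ≥0)/2) half_lt_one).2

lemma floor_add_half (n : ℕ) : ⌊(n : ℝ≥0) + 1/2⌋₊ = n :=
  (fracPart_add_nat n ((1:ℝ≥0)/2) half_lt_one).1

lemma nat_of_frac_zero {a : ℝ≥0} (h : fracPart a = 0) : a = (⌊a⌋₊ : ℝ≥0) := by
  conv_lhs => rw [← floor_add_fracPart a, h, add_zero]

lemma canon_le (K : ℕ) (a : ℝ≥0) : canon K a ≤ (K : ℝ≥0) + 1/2 := by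
  rw [canon]
  split_ifs with h1 h2
  · exact le_rfl
  · exact le_trans (not_lt.mp h1) le_self_add
  · refine add_le_add_left ?_ _
    have : ⌊a⌋₊ ≤ K := by
      have := Nat.floor_le_floor (R := ℝ≥0) (not_lt.mp h1)
      rwa [Nat.floor_natCast] at this
    exact_mod_cast this

lemma canon_regeq (K : ℕ) (a : ℝ≥0) : RegEq K a (canon K a) := by
  rw [canon]
  split_ifs with h1 h2
  · exact Or.inr ⟨h1, lt_add_of_pos_right _ half_pos'⟩
  · exact regeq_refl _ _
  · refine Or.inl ⟨(floor_add_half ⌊a⌋₊).symm, ?_⟩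
    rw [frac_add_half]
    exact ⟨fun h => absurd h h2, fun h => absurd h (by norm_num)⟩

lemma canon_congr {K : ℕ} {a b : ℝ≥0} (h : RegEq K a b) : canon K a = canon K b := by
  by_cases hK : (K : ℝ≥0) < a
  · rw [canon, if_pos hK, canon, if_pos ((regeq_gtK h).mp hK)]
  · have hKb : ¬ (K : ℝ≥0) < b := fun hb => hK ((regeq_gtK h).mpr hb)
    rcases h with ⟨h1, h2⟩ | ⟨h1, _⟩
    · rw [canon, if_neg hK, canon, if_neg hKb]
      by_cases hfa : fracPart a = 0
      · rw [if_pos hfa, if_pos (h2.mp hfa)]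
        rw [nat_of_frac_zero hfa, nat_of_frac_zero (h2.mp hfa), h1]
      · rw [if_neg hfa, if_neg (fun hb => hfa (h2.mpr hb)), h1]
    · exact absurd h1 hK

lemma canon_mono {K : ℕ} {a b : ℝ≥0} (hab : a ≤ b) : canon K a ≤ canon K b := by
  by_cases hb : (K : ℝ≥0) < b
  · have : canon K b = (K : ℝ≥0) + 1/2 := by rw [canon, if_pos hb]
    rw [this]
    exact canon_le K a
  · have ha : ¬ (K : ℝ≥0) < a := fun h => hb (lt_of_lt_of_le h hab)
    have hfab : ⌊a⌋₊ ≤ ⌊b⌋₊ := Nat.floor_le_floor hab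
    rw [canon, if_neg ha, canon, if_neg hb]
    by_cases hfa : fracPart a = 0 <;> by_cases hfb : fracPart b = 0
    · rw [if_pos hfa, if_pos hfb]; exact hab
    · rw [if_pos hfa, if_neg hfb]
      calc a = (⌊a⌋₊ : ℝ≥0) := nat_of_frac_zero hfa
        _ ≤ (⌊b⌋₊ : ℝ≥0) := by exact_mod_cast hfab
        _ ≤ _ := le_self_add
    · rw [if_neg hfa, if_pos hfb]
      have hne : a ≠ b := fun he => hfa (he ▸ hfb)
      have h1 : (⌊a⌋₊ : ℝ≥0) < b := lt_of_le_of_lt (floor_cast_le a) (lt_of_le_of_ne hab hne)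
      have h2 : ⌊a⌋₊ < ⌊b⌋₊ := by
        rw [nat_of_frac_zero hfb] at h1
        exact_mod_cast h1
      calc (⌊a⌋₊ : ℝ≥0) + 1/2 ≤ (⌊a⌋₊ : ℝ≥0) + 1 := add_le_add_right half_lt_one.le _
        _ = ((⌊a⌋₊ + 1 : ℕ) : ℝ≥0) := by push_cast; ring
        _ ≤ (⌊b⌋₊ : ℝ≥0) := by exact_mod_cast h2
        _ = b := (nat_of_frac_zero hfb).symm
    · rw [if_neg hfa, if_neg hfb]
      exact add_le_add_left (by exact_mod_cast hfab) _

lemma hg_le_canon {K : ℕ} {x : ℝ≥0} (hg : HG K x) : x ≤ canon K x := by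
  rcases hg.2 with h0 | hf
  · subst h0; exact zero_le
  · rw [canon]
    split_ifs with h1 h2
    · exact hg.1
    · exact le_rfl
    · rw [← hf, floor_add_fracPart]

lemma hg_norm {K : ℕ} {x : ℝ≥0} (hg : HG K x) : resetStep K x = x := by
  rcases hg.2 with h0 | hf
  · subst h0; exact resetStep_zero K
  · refine resetStep_eq_self ?_
    rintro ⟨m, _, rfl⟩
    rw [fracPart_natCast] at hf
    exact absurd hf.symm half_pos'.ne'

lemma hg_resetStep_canon (K : ℕ) (a : ℝ≥0) : HG K (resetStep K (canon K a)) := by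
  by_cases h : ∃ m : ℕ, m ≤ K ∧ canon K a = (m : ℝ≥0)
  · rw [resetStep_eq_zero h]
    exact ⟨zero_le, Or.inl rfl⟩
  · rw [resetStep_eq_self h]
    refine ⟨canon_le K a, Or.inr ?_⟩
    rw [canon] at h ⊢
    split_ifs with h1 h2
    · exact frac_add_half K
    · exfalso
      rw [if_neg h1, if_pos h2] at h
      refine h ⟨⌊a⌋₊, ?_, nat_of_frac_zero h2⟩
      have := Nat.floor_le_floor (R := ℝ≥0) (not_lt.mp h1)
      rwa [Nat.floor_natCast] at this
    · exact frac_add_half _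

lemma halfnat_frac (n : ℕ) : fracPart ((n : ℝ≥0)/2) = 0 ∨ fracPart ((n : ℝ≥0)/2) = 1/2 := by
  rcases Nat.even_or_odd n with ⟨q, hq⟩ | ⟨q, hq⟩
  · subst hq
    left
    have : ((q + q : ℕ) : ℝ≥0)/2 = (q : ℝ≥0) := by
      rw [← NNReal.coe_inj]; push_cast; ring
    rw [this, fracPart_natCast]
  · subst hq
    right
    have : ((2*q + 1 : ℕ) : ℝ≥0)/2 = (q : ℝ≥0) + 1/2 := by
      rw [← NNReal.coe_inj]; push_cast; ring
    rw [this, frac_add_half]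

lemma hg_halfnat {K : ℕ} {x : ℝ≥0} (hg : HG K x) : ∃ n : ℕ, x = (n : ℝ≥0)/2 := by
  rcases hg.2 with h0 | hf
  · exact ⟨0, by simp [h0]⟩
  · refine ⟨2 * ⌊x⌋₊ + 1, ?_⟩
    conv_lhs => rw [← floor_add_fracPart x, hf]
    rw [← NNReal.coe_inj]; push_cast; ring

lemma canon_halfnat (K : ℕ) (a : ℝ≥0) :
    ∃ n : ℕ, canon K a = (n : ℝ≥0)/2 := by
  rw [canon]
  split_ifs with h1 h2
  · exact ⟨2 * K + 1, by rw [← NNReal.coe_inj]; push_cast; ring⟩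
  · refine ⟨2 * ⌊a⌋₊, ?_⟩
    conv_lhs => rw [nat_of_frac_zero h2]
    rw [← NNReal.coe_inj]; push_cast; ring
  · exact ⟨2 * ⌊a⌋₊ + 1, by rw [← NNReal.coe_inj]; push_cast; ring⟩

lemma halfnat_sub {m n : ℕ} (h : (m : ℝ≥0)/2 ≤ (n : ℝ≥0)/2) :
    ∃ k : ℕ, (n : ℝ≥0)/2 - (m : ℝ≥0)/2 = (k : ℝ≥0)/2 := by
  have hmn : m ≤ n := by
    have := (div_le_div_iff_of_pos_right (c := (2:ℝ≥0)) (by norm_num)).mp h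
    exact_mod_cast this
  refine ⟨n - m, ?_⟩
  rw [Nat.cast_tsub, tsub_div]

/-- The target-construction step for building sigma representatives. -/
lemma stepTarget {K : ℕ} {x x₀ : ℝ≥0} (hreg : RegEq K x x₀) (hg : HG K x₀) (t : ℝ≥0) :
    ∃ t₀ : ℝ≥0, IsSigmaK K t₀ ∧ RegEq K (x + t) (x₀ + t₀) ∧
      HG K (resetStep K (x₀ + t₀)) := by
  set z := canon K (x + t) with hz
  have hxz : x₀ ≤ z := by
    calc x₀ ≤ canon K x₀ := hg_le_canon hg
      _ = canon K x := (canon_congr (regeq_symm hreg))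
      _ ≤ z := canon_mono le_self_add
  refine ⟨z - x₀, ?_, ?_, ?_⟩
  · constructor
    · -- half-integrality of the difference
      obtain ⟨n, hn⟩ := canon_halfnat K (x + t)
      obtain ⟨m, hm⟩ := hg_halfnat hg
      rw [← hz] at hn
      rw [hn, hm]
      obtain ⟨k, hk⟩ := halfnat_sub (m := m) (n := n) (by rw [← hn, ← hm]; exact hxz)
      rw [hk]
      exact halfnat_frac k
    · exact le_trans tsub_le_self (le_trans (canon_le K _) le_rfl)
  · rw [add_tsub_cancel_of_le hxz]
    exact canon_regeq K (x + t)
  · rw [add_tsub_cancel_of_le hxz]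
    exact hg_resetStep_canon K (x + t)


/-! ### Run lemmas -/

lemma steps_nil_iff {A : Type} {M : TA A} {c c' : M.Q × ℝ≥0} :
    Steps M c [] c' ↔ c' = c := by
  constructor
  · intro h; cases h; rfl
  · rintro rfl; exact Steps.nil _

lemma steps_cons_iff {A : Type} {M : TA A} {q : M.Q} {ν t : ℝ≥0} {a : A} {w : TimedWord A}
    {c₂ : M.Q × ℝ≥0} :
    Steps M (q, ν) ((t, a) :: w) c₂ ↔
      ∃ θ ∈ M.trans, θ.src = q ∧ θ.lab = a ∧ θ.guard.sat (ν + t) ∧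
        Steps M (θ.dst, if θ.reset then 0 else ν + t) w c₂ := by
  constructor
  · intro h
    cases h with
    | cons θ hθ hsrc hlab hg hrest => exact ⟨θ, hθ, hsrc, hlab, hg, hrest⟩
  · rintro ⟨θ, hθ, hsrc, hlab, hg, hrest⟩
    exact Steps.cons θ hθ hsrc hlab hg hrest

lemma steps_append {A : Type} {M : TA A} (u : TimedWord A) :
    ∀ {w : TimedWord A} {c₁ c₂ : M.Q × ℝ≥0},
      Steps M c₁ (u ++ w) c₂ ↔ ∃ c, Steps M c₁ u c ∧ Steps M c w c₂ := by
  induction u with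
  | nil =>
    intro w c₁ c₂
    constructor
    · intro h; exact ⟨c₁, Steps.nil c₁, h⟩
    · rintro ⟨c, hc, hw⟩
      rw [steps_nil_iff] at hc
      rwa [hc] at hw
  | cons p u ih =>
    rintro w ⟨q, ν⟩ c₂
    obtain ⟨t, a⟩ := p
    rw [List.cons_append, steps_cons_iff]
    constructor
    · rintro ⟨θ, hθ, hsrc, hlab, hg, hrest⟩
      obtain ⟨c, hc1, hc2⟩ := ih.mp hrest
      exact ⟨c, steps_cons_iff.mpr ⟨θ, hθ, hsrc, hlab, hg, hc1⟩, hc2⟩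
    · rintro ⟨c, hc1, hc2⟩
      rw [steps_cons_iff] at hc1
      obtain ⟨θ, hθ, hsrc, hlab, hg, hrest⟩ := hc1
      exact ⟨θ, hθ, hsrc, hlab, hg, ih.mpr ⟨c, hrest, hc2⟩⟩

lemma steps_unique {A : Type} {M : TA A} (hdet : M.Deterministic) :
    ∀ {w : TimedWord A} {c c₁ c₂ : M.Q × ℝ≥0},
      Steps M c w c₁ → Steps M c w c₂ → c₁ = c₂ := by
  intro w
  induction w with
  | nil =>
    intro c c₁ c₂ h1 h2
    rw [steps_nil_iff] at h1 h2
    rw [h1, h2]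
  | cons p w ih =>
    rintro ⟨q, ν⟩ c₁ c₂ h1 h2
    obtain ⟨t, a⟩ := p
    rw [steps_cons_iff] at h1 h2
    obtain ⟨θ₁, hθ₁, hs₁, hl₁, hg₁, hr₁⟩ := h1
    obtain ⟨θ₂, hθ₂, hs₂, hl₂, hg₂, hr₂⟩ := h2
    have hee : θ₁ = θ₂ := by
      by_contra hne
      exact hdet θ₁ hθ₁ θ₂ hθ₂ hne (hs₁.trans hs₂.symm) (hl₁.trans hl₂.symm) (ν + t) ⟨hg₁, hg₂⟩
    subst hee
    exact ih hr₁ hr₂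

/-! ### Strict guards -/

lemma newclock_eq {A : Type} {M : TA A} {K : ℕ} (hstrict : M.IsStrict K)
    (hmax : M.MaxConstLE K) {θ : TTrans M.Q A} (hθ : θ ∈ M.trans) {v : ℝ≥0}
    (hsat : θ.guard.sat v) : (if θ.reset then (0:ℝ≥0) else v) = resetStep K v := by
  obtain ⟨hsg, hiff⟩ := hstrict θ hθ
  have hmb := hmax θ hθ
  rcases hsg with ⟨m, hg⟩ | ⟨m, hg⟩ | hg
  · have hr : θ.reset = true := hiff.mp ⟨m, hg⟩
    rw [hg] at hsat hmb
    simp only [CC.sat] at hsat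
    simp only [CC.maxConst] at hmb
    rw [hr, if_pos rfl, resetStep_eq_zero ⟨m, hmb, hsat⟩]
  · have hr : θ.reset = false := by
      rcases Bool.eq_false_or_eq_true θ.reset with h | h
      · obtain ⟨m', hm'⟩ := hiff.mpr h
        rw [hg] at hm'
        exact absurd hm' (by simp)
      · exact h
    rw [hg] at hsat
    simp only [CC.sat] at hsat
    rw [hr, if_neg (by simp), resetStep_eq_self ?_]
    rintro ⟨k, hk, rfl⟩
    have h1 : m < k := by exact_mod_cast hsat.1
    have h2 : k < m + 1 := by exact_mod_cast hsat.2
    omega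
  · have hr : θ.reset = false := by
      rcases Bool.eq_false_or_eq_true θ.reset with h | h
      · obtain ⟨m', hm'⟩ := hiff.mpr h
        rw [hg] at hm'
        exact absurd hm' (by simp)
      · exact h
    rw [hg] at hsat
    simp only [CC.sat] at hsat
    rw [hr, if_neg (by simp), resetStep_eq_self ?_]
    rintro ⟨k, hk, rfl⟩
    have : (k : ℝ≥0) ≤ (K : ℝ≥0) := by exact_mod_cast hk
    exact absurd (lt_of_le_of_lt this hsat) (lt_irrefl _)

lemma steps_clock {A : Type} {M : TA A} {K : ℕ} (hstrict : M.IsStrict K)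
    (hmax : M.MaxConstLE K) :
    ∀ {c₁ : M.Q × ℝ≥0} {w : TimedWord A} {c₂ : M.Q × ℝ≥0},
      Steps M c₁ w c₂ → c₂.2 = cKAux K c₁.2 (w.map Prod.fst) := by
  intro c₁ w c₂ h
  induction h with
  | nil c => rfl
  | cons θ hθ hsrc hlab hg hrest ih =>
    simp only [List.map_cons, cKAux]
    rw [← newclock_eq hstrict hmax hθ hg]
    exact ih

lemma interval_sat_iff {m : ℕ} {c : ℝ≥0} :
    ((m : ℝ≥0) < c ∧ c < ((m + 1 : ℕ) : ℝ≥0)) ↔ (⌊c⌋₊ = m ∧ fracPart c ≠ 0) := by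
  constructor
  · rintro ⟨h1, h2⟩
    rcases gt_nat_iff.mp h1 with h3 | h3
    · exfalso
      have : ((m + 1 : ℕ) : ℝ≥0) ≤ (⌊c⌋₊ : ℝ≥0) := by exact_mod_cast h3
      exact absurd (lt_of_lt_of_le h2 (le_trans this (floor_cast_le c))) (lt_irrefl _)
    · exact h3
  · rintro ⟨h1, h2⟩
    refine ⟨gt_nat_iff.mpr (Or.inr ⟨h1, h2⟩), ?_⟩
    calc c = (⌊c⌋₊ : ℝ≥0) + fracPart c := (floor_add_fracPart c).symm
      _ < (⌊c⌋₊ : ℝ≥0) + 1 := add_lt_add_right (fracPart_lt_one c) _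
      _ = ((m + 1 : ℕ) : ℝ≥0) := by rw [h1]; push_cast; ring

lemma strict_sat_iff {K : ℕ} {φ : CC} (hsg : StrictGuard K φ) (hmax : φ.maxConst ≤ K)
    {a b : ℝ≥0} (h : RegEq K a b) : φ.sat a ↔ φ.sat b := by
  rcases hsg with ⟨m, rfl⟩ | ⟨m, rfl⟩ | rfl
  · simp only [CC.sat]
    simp only [CC.maxConst] at hmax
    exact regeq_eq_nat h hmax
  · simp only [CC.sat, CC.maxConst] at *
    have hm1 : m + 1 ≤ K := le_trans (le_max_right _ _) hmax
    rw [show ((m + 1 : ℕ) : ℝ≥0) = ((m : ℕ) : ℝ≥0) + 1 by push_cast; ring] at *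
    rw [← show ((m + 1 : ℕ) : ℝ≥0) = ((m : ℕ) : ℝ≥0) + 1 by push_cast; ring]
    rw [interval_sat_iff, interval_sat_iff]
    rcases h with ⟨h1, h2⟩ | ⟨h1, h2⟩
    · rw [h1]
      exact and_congr_right fun _ => not_iff_not.mpr h2
    · constructor <;> rintro ⟨hf, _⟩
      · exfalso
        have : K ≤ ⌊a⌋₊ := Nat.le_floor h1.le
        omega
      · exfalso
        have : K ≤ ⌊b⌋₊ := Nat.le_floor h2.le
        omega
  · simp only [CC.sat]
    exact regeq_gtK h

/-! ### The simulation lemma -/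

lemma langFrom_nil {A : Type} {M : TA A} {c : M.Q × ℝ≥0} :
    ([] : TimedWord A) ∈ M.LangFrom c ↔ c.1 ∈ M.final := by
  constructor
  · rintro ⟨q', ν', h, hf⟩
    rw [steps_nil_iff] at h
    rw [← h]
    exact hf
  · intro hf
    exact ⟨c.1, c.2, by rw [Prod.mk.eta]; exact Steps.nil c, hf⟩

lemma langFrom_cons {A : Type} {M : TA A} {q : M.Q} {ν t : ℝ≥0} {a : A} {w : TimedWord A} :
    ((t, a) :: w) ∈ M.LangFrom (q, ν) ↔
      ∃ θ ∈ M.trans, θ.src = q ∧ θ.lab = a ∧ θ.guard.sat (ν + t) ∧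
        w ∈ M.LangFrom (θ.dst, if θ.reset then 0 else ν + t) := by
  constructor
  · rintro ⟨q', ν', h, hf⟩
    rw [steps_cons_iff] at h
    obtain ⟨θ, hθ, hsrc, hlab, hg, hrest⟩ := h
    exact ⟨θ, hθ, hsrc, hlab, hg, q', ν', hrest, hf⟩
  · rintro ⟨θ, hθ, hsrc, hlab, hg, q', ν', hrest, hf⟩
    exact ⟨q', ν', steps_cons_iff.mpr ⟨θ, hθ, hsrc, hlab, hg, hrest⟩, hf⟩

lemma sim_lemma {A : Type} {M : TA A} {K : ℕ} (hstrict : M.IsStrict K)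
    (hmax : M.MaxConstLE K) :
    ∀ (w : TimedWord A) (q : M.Q) (x y : ℝ≥0), resetStep K x = x → resetStep K y = y →
      RegEq K x y → (w ∈ M.LangFrom (q, x) ↔ tauWAux K x y w ∈ M.LangFrom (q, y)) := by
  intro w
  induction w with
  | nil =>
    intro q x y _ _ _
    rw [show tauWAux K x y ([] : TimedWord A) = [] from rfl, langFrom_nil, langFrom_nil]
  | cons p w ih =>
    rintro q x y hx hy h
    obtain ⟨t, a⟩ := p
    simp only [tauWAux]
    have hreg : RegEq K (x + t) (y + tauStep K x y t) := tauStep_regeq hx hy h t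
    rw [langFrom_cons, langFrom_cons]
    constructor
    · rintro ⟨θ, hθ, hsrc, hlab, hg, hw⟩
      have hg' : θ.guard.sat (y + tauStep K x y t) :=
        (strict_sat_iff (hstrict θ hθ).1 (hmax θ hθ) hreg).mp hg
      refine ⟨θ, hθ, hsrc, hlab, hg', ?_⟩
      rw [newclock_eq hstrict hmax hθ hg'] 
      rw [newclock_eq hstrict hmax hθ hg] at hw
      exact (ih θ.dst _ _ (resetStep_idem _ _) (resetStep_idem _ _)
        (resetStep_regeq hreg)).mp hw
    · rintro ⟨θ, hθ, hsrc, hlab, hg', hw⟩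
      have hg : θ.guard.sat (x + t) :=
        (strict_sat_iff (hstrict θ hθ).1 (hmax θ hθ) hreg).mpr hg'
      refine ⟨θ, hθ, hsrc, hlab, hg, ?_⟩
      rw [newclock_eq hstrict hmax hθ hg]
      rw [newclock_eq hstrict hmax hθ hg'] at hw
      exact (ih θ.dst _ _ (resetStep_idem _ _) (resetStep_idem _ _)
        (resetStep_regeq hreg)).mpr hw


/-! ### SameState implies ApproxLK -/

lemma sameState_approx {A : Type} {K : ℕ} {B : TA A} (hB : IsKAcceptor B K)
    {L : Set (TimedWord A)} (hL : B.Lang = L) {u v : TimedWord A}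
    (h : B.SameState u v) : ApproxLK L K u v := by
  obtain ⟨hfin, hcomp, hdet, hirta, hstrict, hmax, hregS⟩ := hB
  have hregeq : RegEq K (cKW K u) (cKW K v) := hregS u v h
  obtain ⟨q, ν, ν', hu, hv⟩ := h
  have hν : ν = cKW K u := steps_clock hstrict hmax hu
  have hν' : ν' = cKW K v := steps_clock hstrict hmax hv
  subst hν; subst hν'
  have hnx := resetStep_cKW K u
  have hny := resetStep_cKW K v
  refine ⟨hregeq, ?_⟩
  have hfun : (tauW K (cKW K u) (cKW K v) : TimedWord A → TimedWord A) =
      tauWAux K (cKW K u) (cKW K v) := tauW_funext A hnx hny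
  have key : ∀ w : TimedWord A,
      w ∈ residual L u ↔ tauWAux K (cKW K u) (cKW K v) w ∈ residual L v := by
    intro w
    have h1 : (u ++ w ∈ L) ↔ w ∈ B.LangFrom (q, cKW K u) := by
      rw [← hL]
      constructor
      · rintro ⟨q'', ν'', hsteps, hfin'⟩
        obtain ⟨c, hc1, hc2⟩ := (steps_append u).mp hsteps
        have hcq : c = (q, cKW K u) := steps_unique hdet hc1 hu
        rw [hcq] at hc2
        exact ⟨q'', ν'', hc2, hfin'⟩
      · rintro ⟨q'', ν'', hsteps, hfin'⟩
        exact ⟨q'', ν'', (steps_append u).mpr ⟨_, hu, hsteps⟩, hfin'⟩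
    have h2 : (v ++ tauWAux K (cKW K u) (cKW K v) w ∈ L) ↔
        tauWAux K (cKW K u) (cKW K v) w ∈ B.LangFrom (q, cKW K v) := by
      rw [← hL]
      constructor
      · rintro ⟨q'', ν'', hsteps, hfin'⟩
        obtain ⟨c, hc1, hc2⟩ := (steps_append v).mp hsteps
        have hcq : c = (q, cKW K v) := steps_unique hdet hc1 hv
        rw [hcq] at hc2
        exact ⟨q'', ν'', hc2, hfin'⟩
      · rintro ⟨q'', ν'', hsteps, hfin'⟩
        exact ⟨q'', ν'', (steps_append v).mpr ⟨_, hv, hsteps⟩, hfin'⟩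
    show (u ++ w ∈ L) ↔ (v ++ _ ∈ L)
    rw [h1, h2]
    exact sim_lemma hstrict hmax w q _ _ hnx hny hregeq
  rw [hfun]
  ext z
  constructor
  · rintro ⟨w, hw, rfl⟩
    exact (key w).mp hw
  · intro hz
    refine ⟨tauWAux K (cKW K v) (cKW K u) z, ?_, ?_⟩
    · have hinv : tauWAux K (cKW K u) (cKW K v) (tauWAux K (cKW K v) (cKW K u) z) = z :=
        tauWAux_inv K z _ _ hny hnx (regeq_symm hregeq)
      rw [key, hinv]
      exact hz
    · exact tauWAux_inv K z _ _ hny hnx (regeq_symm hregeq)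

/-! ### ApproxLK is symmetric and transitive -/

lemma approx_symm {A : Type} {K : ℕ} {L : Set (TimedWord A)} {u v : TimedWord A}
    (h : ApproxLK L K u v) : ApproxLK L K v u := by
  obtain ⟨hr, him⟩ := h
  have hnx := resetStep_cKW K u
  have hny := resetStep_cKW K v
  refine ⟨regeq_symm hr, ?_⟩
  rw [tauW_funext A hny hnx, ← him, tauW_funext A hnx hny, ← Set.image_comp]
  rw [show (tauWAux K (cKW K v) (cKW K u) ∘ tauWAux K (cKW K u) (cKW K v)) = id from
    funext fun w => tauWAux_inv K w _ _ hnx hny hr, Set.image_id]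

lemma approx_trans {A : Type} {K : ℕ} {L : Set (TimedWord A)} {u v w : TimedWord A}
    (h1 : ApproxLK L K u v) (h2 : ApproxLK L K v w) : ApproxLK L K u w := by
  obtain ⟨hr1, him1⟩ := h1
  obtain ⟨hr2, him2⟩ := h2
  have hnu := resetStep_cKW K u
  have hnv := resetStep_cKW K v
  have hnw := resetStep_cKW K w
  refine ⟨regeq_trans hr1 hr2, ?_⟩
  rw [tauW_funext A hnu hnw]
  rw [tauW_funext A hnv hnw] at him2
  rw [tauW_funext A hnu hnv] at him1
  rw [← him2, ← him1, ← Set.image_comp]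
  exact Set.image_congr'
    (fun z => (tauWAux_comp K z (cKW K u) (cKW K v) (cKW K w) hnu hnv hnw hr1 hr2).symm)

/-! ### Sigma representatives -/

lemma exists_sigma_steps {A : Type} {M : TA A} {K : ℕ} (hstrict : M.IsStrict K)
    (hmax : M.MaxConstLE K) :
    ∀ {c₁ : M.Q × ℝ≥0} {w : TimedWord A} {c₂ : M.Q × ℝ≥0}, Steps M c₁ w c₂ →
      ∀ x₀ : ℝ≥0, RegEq K c₁.2 x₀ → HG K x₀ →
        ∃ (w₀ : TimedWord A) (ν₀ : ℝ≥0), SigmaWord K w₀ ∧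
          Steps M (c₁.1, x₀) w₀ (c₂.1, ν₀) := by
  intro c₁ w c₂ h
  induction h with
  | nil c =>
    intro x₀ _ _
    exact ⟨[], x₀, fun p hp => absurd hp List.not_mem_nil, Steps.nil _⟩
  | @cons q ν t a w c θ hθ hsrc hlab hg hrest ih =>
    intro x₀ hreg hhg
    obtain ⟨t₀, hσ, hreg', hhg'⟩ := stepTarget hreg hhg t
    have hg' : θ.guard.sat (x₀ + t₀) :=
      (strict_sat_iff (hstrict θ hθ).1 (hmax θ hθ) hreg').mp hg
    obtain ⟨w₀, ν₀, hσw, hsteps⟩ := ih (resetStep K (x₀ + t₀))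
      (by
        show RegEq K (if θ.reset then 0 else ν + t) _
        rw [newclock_eq hstrict hmax hθ hg]
        exact resetStep_regeq hreg') hhg'
    refine ⟨(t₀, a) :: w₀, ν₀, ?_, ?_⟩
    · intro p hp
      rcases List.mem_cons.mp hp with rfl | hp'
      · exact hσ
      · exact hσw p hp'
    · refine Steps.cons θ hθ hsrc hlab hg' ?_
      rw [newclock_eq hstrict hmax hθ hg']
      exact hsteps

lemma exists_sigma_word {A : Type} {K : ℕ} {B : TA A} (hB : IsKAcceptor B K)
    (u : TimedWord A) : ∃ u₀, SigmaWord K u₀ ∧ B.SameState u u₀ := by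
  obtain ⟨hfin, hcomp, hdet, hirta, hstrict, hmax, hregS⟩ := hB
  obtain ⟨c, hc⟩ := hcomp u
  obtain ⟨u₀, ν₀, hσ, hst⟩ := exists_sigma_steps hstrict hmax hc 0
    (regeq_refl K 0) ⟨zero_le, Or.inl rfl⟩
  exact ⟨u₀, hσ, c.1, c.2, ν₀, by rw [Prod.mk.eta]; exact hc, hst⟩

lemma sameState_symm {A : Type} {B : TA A} {u v : TimedWord A} (h : B.SameState u v) :
    B.SameState v u := by
  obtain ⟨q, ν, ν', h1, h2⟩ := h
  exact ⟨q, ν', ν, h2, h1⟩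

lemma sameState_trans {A : Type} {B : TA A} (hdet : B.Deterministic) {u v w : TimedWord A}
    (h1 : B.SameState u v) (h2 : B.SameState v w) : B.SameState u w := by
  obtain ⟨q, a, b, hu, hv⟩ := h1
  obtain ⟨q', c, d, hv', hw⟩ := h2
  have hqq : (q, b) = (q', c) := steps_unique hdet hv hv'
  have := congrArg Prod.fst hqq
  simp only at this
  exact ⟨q, a, d, hu, by rw [this]; exact hw⟩

end Lemmas

/-- `≈^B` coincides with `≈^{L,K}` on all timed words iff it does so
on small half-integral words. -/
theorem statement15 {A : Type} [Finite A] (K : ℕ) (L : Set (TimedWord A))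
    (B : TA A) (hB : IsKAcceptor B K) (hL : B.Lang = L) :
    (∀ u v : TimedWord A, B.SameState u v ↔ ApproxLK L K u v) ↔
      (∀ u v : TimedWord A, SigmaWord K u → SigmaWord K v →
        (B.SameState u v ↔ ApproxLK L K u v)) := by
  constructor
  · intro h u v _ _
    exact h u v
  · intro H u v
    have hdet := hB.2.2.1
    constructor
    · exact fun h => sameState_approx hB hL h
    · intro h
      obtain ⟨u₀, hσu, hsu⟩ := exists_sigma_word hB u
      obtain ⟨v₀, hσv, hsv⟩ := exists_sigma_word hB v
      have a1 := sameState_approx hB hL hsu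
      have a2 := sameState_approx hB hL hsv
      have a3 : ApproxLK L K u₀ v₀ := approx_trans (approx_symm a1) (approx_trans h a2)
      have s3 : B.SameState u₀ v₀ := (H u₀ v₀ hσu hσv).mpr a3
      exact sameState_trans hdet hsu (sameState_trans hdet s3 (sameState_symm hsv))

end IRTA
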